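/- For every constant c ∈ (0,1) there exists K > 0 such that for every integer k ≤ −1 and every u > 0 satisfying c⁻¹·e^{−π/u} < c, one has 0 ≤ ∫_{c⁻¹·e^{−π/u}}^{c} r^{k−1}·sin²(u·log r) dr ≤ K·u²·c^{−k}·e^{−kπ/u}, with the constant K independent of k and u. (Equation (4.4) of the paper: the integral is O(u²)·c^{−k}·ρᵏ with ρ = e^{−π/u}.) -/

import Mathlib

open Real

/-- Equation (4.4): for `k ≤ -1`,
`0 ≤ ∫_{c⁻¹ e^{-π/u}}^{c} r^{k-1} sin²(u log r) dr ≤ K u² c^{-k} e^{-kπ/u}`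
with `K` independent of `k` and `u`. -/
theorem collar_integral_neg_power (c : ℝ) (hc0 : 0 < c) (hc1 : c < 1) :
    ∃ K : ℝ, 0 < K ∧ ∀ k : ℤ, k ≤ -1 → ∀ u : ℝ, 0 < u →
      c⁻¹ * Real.exp (-(π / u)) < c →
      0 ≤ (∫ r in (c⁻¹ * Real.exp (-(π / u)))..c,
            r ^ (k - 1) * Real.sin (u * Real.log r) ^ 2) ∧
      (∫ r in (c⁻¹ * Real.exp (-(π / u)))..c,
            r ^ (k - 1) * Real.sin (u * Real.log r) ^ 2) ≤
        K * u ^ 2 * c ^ (-k) * Real.exp (-(k : ℝ) * π / u) := by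
  set L : ℝ := -Real.log c with hLdef
  have hL0 : 0 < L := by
    have := Real.log_neg hc0 hc1
    simp only [hLdef]; linarith
  refine ⟨2 * (L + 4) ^ 2, by positivity, ?_⟩
  intro k hk u hu hac
  set a : ℝ := c⁻¹ * Real.exp (-(π / u)) with hadef
  have ha0 : 0 < a := by positivity
  have hac' : a ≤ c := hac.le
  have hloga : Real.log a = L - π / u := by
    rw [hadef, Real.log_mul (by positivity) (Real.exp_ne_zero _), Real.log_inv,
      Real.log_exp]
    simp only [hLdef]; ring
  -- pointwise bound on [a, c]
  have key : ∀ r ∈ Set.Icc a c, r ^ (k - 1) * Real.sin (u * Real.log r) ^ 2 ≤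
      ((L + 4) ^ 2 * u ^ 2 * a ^ k) * (Real.sqrt a * r ^ (-(3 / 2) : ℝ)) := by
    intro r hr
    obtain ⟨hra, hrc⟩ := hr
    have hr0 : 0 < r := lt_of_lt_of_le ha0 hra
    have hra1 : 1 ≤ r / a := (one_le_div ha0).2 hra
    have hra0 : 0 < r / a := by positivity
    set q : ℝ := (r / a) ^ ((1 : ℝ) / 4) with hqdef
    have hq1 : 1 ≤ q := Real.one_le_rpow hra1 (by norm_num)
    have hq0 : 0 < q := lt_of_lt_of_le one_pos hq1
    have hlogq : Real.log (r / a) = 4 * Real.log q := by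
      rw [hqdef, Real.log_rpow hra0]; ring
    -- step: log(r/a) + L ≤ (L+4) q
    have hstep : Real.log (r / a) + L ≤ (L + 4) * q := by
      have h1 : Real.log q ≤ q - 1 := Real.log_le_sub_one_of_pos hq0
      nlinarith [hL0, hq1]
    have hlognn : 0 ≤ Real.log (r / a) + L := by
      have := Real.log_nonneg hra1
      linarith
    -- sin² bound
    have hsin : Real.sin (u * Real.log r) ^ 2 ≤ (u * (Real.log (r / a) + L)) ^ 2 := by
      have h1 : Real.sin (u * Real.log r) ^ 2
          = Real.sin (u * Real.log r + π) ^ 2 := by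
        rw [Real.sin_add_pi]; ring
      have h2 : u * Real.log r + π = u * (Real.log (r / a) + L) := by
        rw [Real.log_div (ne_of_gt hr0) (ne_of_gt ha0), hloga]
        field_simp
        ring
      rw [h1, h2]
      exact Real.sin_sq_le_sq
    have hsin2 : Real.sin (u * Real.log r) ^ 2
        ≤ u ^ 2 * ((L + 4) ^ 2 * (Real.sqrt r / Real.sqrt a)) := by
      have hq2 : q ^ 2 = Real.sqrt r / Real.sqrt a := by
        rw [hqdef, ← Real.rpow_natCast ((r / a) ^ ((1:ℝ)/4)) 2,
          ← Real.rpow_mul hra0.le]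
        norm_num
        simp only [Real.sqrt_eq_rpow]
        norm_num
        exact Real.div_rpow hr0.le ha0.le _
      have hsq : (Real.log (r / a) + L) ^ 2 ≤ ((L + 4) * q) ^ 2 := by
        apply pow_le_pow_left₀ hlognn hstep
      calc Real.sin (u * Real.log r) ^ 2 ≤ (u * (Real.log (r / a) + L)) ^ 2 := hsin
        _ = u ^ 2 * (Real.log (r / a) + L) ^ 2 := by ring
        _ ≤ u ^ 2 * ((L + 4) * q) ^ 2 := by nlinarith [sq_nonneg u]
        _ = u ^ 2 * ((L + 4) ^ 2 * q ^ 2) := by ring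
        _ = u ^ 2 * ((L + 4) ^ 2 * (Real.sqrt r / Real.sqrt a)) := by rw [hq2]
    -- power bound
    have hpow : r ^ (k - 1) ≤ a ^ (k + 1) * r ^ (-2 : ℤ) := by
      have hn : k + 1 = -((-(k + 1)).toNat : ℤ) := by omega
      have hle : a ^ ((-(k + 1)).toNat) ≤ r ^ ((-(k + 1)).toNat) :=
        pow_le_pow_left₀ ha0.le hra _
      have h2 : r ^ (k + 1) ≤ a ^ (k + 1) := by
        rw [hn, zpow_neg, zpow_neg, zpow_natCast, zpow_natCast]
        exact inv_anti₀ (pow_pos ha0 _) hle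
      have h3 : r ^ (k - 1) = r ^ (k + 1) * r ^ (-2 : ℤ) := by
        rw [← zpow_add₀ (ne_of_gt hr0)]; congr 1; omega
      rw [h3]
      have : (0:ℝ) ≤ r ^ (-2 : ℤ) := zpow_nonneg hr0.le _
      exact mul_le_mul_of_nonneg_right h2 this
    have hrr : Real.sqrt r * (r : ℝ) ^ (-2 : ℤ) = r ^ (-(3 / 2) : ℝ) := by
      rw [Real.sqrt_eq_rpow, ← Real.rpow_intCast r (-2), ← Real.rpow_add hr0]
      norm_num
    calc r ^ (k - 1) * Real.sin (u * Real.log r) ^ 2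
        ≤ (a ^ (k + 1) * r ^ (-2 : ℤ)) *
            (u ^ 2 * ((L + 4) ^ 2 * (Real.sqrt r / Real.sqrt a))) := by
          apply mul_le_mul hpow hsin2 (sq_nonneg _)
          positivity
      _ = ((L + 4) ^ 2 * u ^ 2 * a ^ k) *
            ((a / Real.sqrt a) * (Real.sqrt r * r ^ (-2 : ℤ))) := by
          rw [zpow_add_one₀ (ne_of_gt ha0)]; ring
      _ = ((L + 4) ^ 2 * u ^ 2 * a ^ k) * (Real.sqrt a * r ^ (-(3 / 2) : ℝ)) := by
          rw [Real.div_sqrt, hrr]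
  -- nonnegativity of integrand
  have hnn : ∀ r ∈ Set.Icc a c, 0 ≤ r ^ (k - 1) * Real.sin (u * Real.log r) ^ 2 := by
    intro r hr
    have hr0 : 0 < r := lt_of_lt_of_le ha0 hr.1
    exact mul_nonneg (zpow_nonneg hr0.le _) (sq_nonneg _)
  -- integrability
  have hsub : Set.uIcc a c ⊆ {(0:ℝ)}ᶜ := by
    rw [Set.uIcc_of_le hac']
    intro x hx
    exact ne_of_gt (lt_of_lt_of_le ha0 hx.1)
  have hcont1 : ContinuousOn (fun r : ℝ => r ^ (k - 1) * Real.sin (u * Real.log r) ^ 2)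
      (Set.uIcc a c) := by
    apply ContinuousOn.mul
    · exact continuousOn_id.zpow₀ _ (fun x hx => Or.inl (hsub hx))
    · exact ((Real.continuous_sin.comp_continuousOn
        (continuousOn_const.mul (Real.continuousOn_log.mono hsub))).pow 2)
  have hint1 : IntervalIntegrable
      (fun r : ℝ => r ^ (k - 1) * Real.sin (u * Real.log r) ^ 2)
      MeasureTheory.volume a c := hcont1.intervalIntegrable
  have hcont2 : ContinuousOn
      (fun r : ℝ => ((L + 4) ^ 2 * u ^ 2 * a ^ k) * (Real.sqrt a * r ^ (-(3 / 2) : ℝ)))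
      (Set.uIcc a c) := by
    apply ContinuousOn.mul continuousOn_const
    apply ContinuousOn.mul continuousOn_const
    exact continuousOn_id.rpow_const (fun x hx => Or.inl (hsub hx))
  have hint2 : IntervalIntegrable
      (fun r : ℝ => ((L + 4) ^ 2 * u ^ 2 * a ^ k) * (Real.sqrt a * r ^ (-(3 / 2) : ℝ)))
      MeasureTheory.volume a c := hcont2.intervalIntegrable
  constructor
  · exact intervalIntegral.integral_nonneg hac' hnn
  · have hmono : (∫ r in a..c, r ^ (k - 1) * Real.sin (u * Real.log r) ^ 2)
        ≤ ∫ r in a..c,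
            ((L + 4) ^ 2 * u ^ 2 * a ^ k) * (Real.sqrt a * r ^ (-(3 / 2) : ℝ)) :=
      intervalIntegral.integral_mono_on hac' hint1 hint2 (fun x hx => key x hx)
    -- compute the RHS integral
    have hzero : (0:ℝ) ∉ Set.uIcc a c := by
      rw [Set.uIcc_of_le hac']
      intro h
      exact absurd h.1 (not_le.2 ha0)
    have hrint : (∫ r in a..c, r ^ (-(3 / 2) : ℝ))
        = (c ^ ((-(3 / 2) : ℝ) + 1) - a ^ ((-(3 / 2) : ℝ) + 1)) / ((-(3 / 2) : ℝ) + 1) :=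
      integral_rpow (Or.inr ⟨by norm_num, hzero⟩)
    have hcomp : (∫ r in a..c,
          ((L + 4) ^ 2 * u ^ 2 * a ^ k) * (Real.sqrt a * r ^ (-(3 / 2) : ℝ)))
        ≤ 2 * (L + 4) ^ 2 * u ^ 2 * a ^ k := by
      rw [intervalIntegral.integral_const_mul, intervalIntegral.integral_const_mul, hrint]
      have hsa : Real.sqrt a * a ^ ((-(1:ℝ)) / 2) = 1 := by
        rw [Real.sqrt_eq_rpow, ← Real.rpow_add ha0]
        norm_num
      have h32 : ((-(3 / 2) : ℝ) + 1) = (-(1:ℝ)) / 2 := by norm_num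
      rw [h32]
      have hC : (0:ℝ) ≤ (L + 4) ^ 2 * u ^ 2 * a ^ k := by positivity
      have hbound : Real.sqrt a * ((c ^ ((-(1:ℝ)) / 2) - a ^ ((-(1:ℝ)) / 2)) / ((-(1:ℝ)) / 2)) ≤ 2 := by
        have hc2 : (0:ℝ) ≤ Real.sqrt a * c ^ ((-(1:ℝ)) / 2) := by positivity
        have : Real.sqrt a * ((c ^ ((-(1:ℝ)) / 2) - a ^ ((-(1:ℝ)) / 2)) / ((-(1:ℝ)) / 2))
            = 2 * (Real.sqrt a * a ^ ((-(1:ℝ)) / 2)) - 2 * (Real.sqrt a * c ^ ((-(1:ℝ)) / 2)) := by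
          ring
        rw [this, hsa]
        linarith
      calc (L + 4) ^ 2 * u ^ 2 * a ^ k *
            (Real.sqrt a * ((c ^ ((-(1:ℝ)) / 2) - a ^ ((-(1:ℝ)) / 2)) / ((-(1:ℝ)) / 2)))
          ≤ (L + 4) ^ 2 * u ^ 2 * a ^ k * 2 := by
            apply mul_le_mul_of_nonneg_left hbound hC
        _ = 2 * (L + 4) ^ 2 * u ^ 2 * a ^ k := by ring
    -- rewrite a^k
    have hak : a ^ k = c ^ (-k) * Real.exp (-(k : ℝ) * π / u) := by
      rw [hadef, mul_zpow]
      congr 1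
      · rw [inv_zpow, ← zpow_neg]
      · rw [← Real.rpow_intCast (Real.exp (-(π / u))) k, ← Real.exp_mul]
        congr 1
        field_simp
    calc (∫ r in a..c, r ^ (k - 1) * Real.sin (u * Real.log r) ^ 2)
        ≤ 2 * (L + 4) ^ 2 * u ^ 2 * a ^ k := le_trans hmono hcomp
      _ = 2 * (L + 4) ^ 2 * u ^ 2 * (c ^ (-k) * Real.exp (-(k : ℝ) * π / u)) := by
          rw [hak]
      _ = 2 * (L + 4) ^ 2 * u ^ 2 * c ^ (-k) * Real.exp (-(k : ℝ) * π / u) := by ring
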